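/- For all integers M ≥ 1, k ≥ 1, and K with K ≥ (k+1)(M+1), the following identity of rational numbers holds: ∏_{j=1}^{k} [C(j(M+1)−1, M) · C(K−M−1, j(M+1))] / [C(K−M−1, (j−1)(M+1)) · C(K−1−j(M+1), M)] = ∏_{j=1}^{k} (K/(M+1) − j)/j, where C(n, m) denotes the binomial coefficient and K/(M+1) denotes the exact rational quotient. -/

import Mathlib

open Nat in
lemma key (m' b c : ℕ) :
    ((Nat.choose (m' + b) m' : ℚ) * (Nat.choose (m' + 1 + b + c) (m' + 1 + b) : ℚ)) /
      ((Nat.choose (m' + 1 + b + c) b : ℚ) * (Nat.choose (m' + c) m' : ℚ))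
    = ((m' : ℚ) + 1 + c) / ((m' : ℚ) + 1 + b) := by
  have h1 : m' ≤ m' + b := by omega
  have h2 : m' + 1 + b ≤ m' + 1 + b + c := by omega
  have h3 : b ≤ m' + 1 + b + c := by omega
  have h4 : m' ≤ m' + c := by omega
  rw [Nat.cast_choose ℚ h1, Nat.cast_choose ℚ h2, Nat.cast_choose ℚ h3,
    Nat.cast_choose ℚ h4]
  have e1 : m' + b - m' = b := by omega
  have e2 : m' + 1 + b + c - (m' + 1 + b) = c := by omega
  have e3 : m' + 1 + b + c - b = m' + 1 + c := by omega
  have e4 : m' + c - m' = c := by omega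
  rw [e1, e2, e3, e4]
  have f1 : ((Nat.factorial (m' + 1 + b) : ℚ)) = ((m' : ℚ) + 1 + b) * Nat.factorial (m' + b) := by
    rw [show m' + 1 + b = (m' + b) + 1 by omega, Nat.factorial_succ]; push_cast; ring
  have f2 : ((Nat.factorial (m' + 1 + c) : ℚ)) = ((m' : ℚ) + 1 + c) * Nat.factorial (m' + c) := by
    rw [show m' + 1 + c = (m' + c) + 1 by omega, Nat.factorial_succ]; push_cast; ring
  rw [f1, f2]
  have n1 : ((Nat.factorial m' : ℚ)) ≠ 0 := by exact_mod_cast (Nat.factorial_pos _).ne'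
  have n2 : ((Nat.factorial b : ℚ)) ≠ 0 := by exact_mod_cast (Nat.factorial_pos _).ne'
  have n3 : ((Nat.factorial c : ℚ)) ≠ 0 := by exact_mod_cast (Nat.factorial_pos _).ne'
  have n4 : ((Nat.factorial (m' + b) : ℚ)) ≠ 0 := by exact_mod_cast (Nat.factorial_pos _).ne'
  have n5 : ((Nat.factorial (m' + c) : ℚ)) ≠ 0 := by exact_mod_cast (Nat.factorial_pos _).ne'
  have n6 : ((Nat.factorial (m' + 1 + b + c) : ℚ)) ≠ 0 := by
    exact_mod_cast (Nat.factorial_pos _).ne'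
  have n7 : ((m' : ℚ) + 1 + b) ≠ 0 := by positivity
  have n8 : ((m' : ℚ) + 1 + c) ≠ 0 := by positivity
  field_simp

/-- the product of the binomial-coefficient ratios collapses to
    `∏_{j=1}^{k} (K/(M+1) − j)/j`. -/
theorem prod_choose_ratio_eq (M k K : ℕ) (hM : 1 ≤ M) (hk : 1 ≤ k)
    (hK : (k + 1) * (M + 1) ≤ K) :
    ∏ j ∈ Finset.Icc 1 k,
        ((Nat.choose (j * (M + 1) - 1) M : ℚ) *
            (Nat.choose (K - M - 1) (j * (M + 1)) : ℚ)) /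
          ((Nat.choose (K - M - 1) ((j - 1) * (M + 1)) : ℚ) *
            (Nat.choose (K - 1 - j * (M + 1)) M : ℚ))
      = ∏ j ∈ Finset.Icc 1 k, ((K : ℚ) / ((M : ℚ) + 1) - (j : ℚ)) / (j : ℚ) := by
  apply Finset.prod_congr rfl
  intro j hj
  simp only [Finset.mem_Icc] at hj
  obtain ⟨hj1, hj2⟩ := hj
  have haK : j * (M + 1) + (M + 1) ≤ K := by
    calc j * (M + 1) + (M + 1) = (j + 1) * (M + 1) := by ring
    _ ≤ (k + 1) * (M + 1) := by apply Nat.mul_le_mul_right; omega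
    _ ≤ K := hK
  have hmul : j * (M + 1) = (j - 1) * (M + 1) + (M + 1) := by
    rw [Nat.sub_one_mul]
    have : M + 1 ≤ j * (M + 1) := Nat.le_mul_of_pos_left _ (by omega)
    omega
  set b := (j - 1) * (M + 1) with hb
  set c := K - j * (M + 1) - (M + 1) with hc
  have e0 : j * (M + 1) - 1 = M + b := by omega
  have e1 : K - M - 1 = M + 1 + b + c := by omega
  have e2 : j * (M + 1) = M + 1 + b := by omega
  have e3 : K - 1 - j * (M + 1) = M + c := by omega
  rw [e0, e1, e3, e2, key M b c]
  have hKeq : K = M + 1 + b + (M + 1) + c := by omega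
  have hbQ : ((M : ℚ) + 1 + b) = (j : ℚ) * ((M : ℚ) + 1) := by
    have := congrArg (Nat.cast : ℕ → ℚ) e2
    push_cast at this
    linarith
  have hcQ : ((M : ℚ) + 1 + c) = (K : ℚ) - (j : ℚ) * ((M : ℚ) + 1) := by
    have := congrArg (Nat.cast : ℕ → ℚ) hKeq
    push_cast at this
    rw [hbQ] at this
    linarith
  rw [hbQ, hcQ]
  have hj0 : (j : ℚ) ≠ 0 := by
    simpa using (by omega : j ≠ 0)
  have hM0 : ((M : ℚ) + 1) ≠ 0 := by positivity
  field_simp
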